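/- Let G ≤ Sym(n) be a transitive permutation group, let i, j ∈ {1,…,n} be distinct, and let D = D_{i→j} ∪ D_{j→i}, where D_{i→j} denotes the set of all derangements in G mapping i to j. Then the set G_{j→j} ∪ G_{i→j} (all elements of G fixing j, together with all elements of G mapping i to j) is an independent set of size 2|G|/n in the Cayley graph Cay(G, Der(G) \ D). -/

import Mathlib

/-- The Cayley graph of a group `Γ` with (inverse-closed) connection set `C`:
`g` and `h` are adjacent iff they are distinct and `g⁻¹ * h ∈ C` (symmetrized). -/
def cayley (Γ : Type*) [Group Γ] (C : Set Γ) : SimpleGraph Γ where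
  Adj g h := g ≠ h ∧ g⁻¹ * h ∈ C ∧ h⁻¹ * g ∈ C
  symm := ⟨fun _ _ ⟨hne, h1, h2⟩ => ⟨hne.symm, h2, h1⟩⟩
  loopless := ⟨fun _ ⟨hne, _⟩ => hne rfl⟩

/-- A set of vertices of a graph is independent if its elements are pairwise non-adjacent. -/
def IsIndepSet {V : Type*} (X : SimpleGraph V) (s : Set V) : Prop :=
  s.Pairwise fun a b => ¬ X.Adj a b

/-- The independence number of a graph: the maximum size of an independent set. -/
noncomputable def indepNum {V : Type*} (X : SimpleGraph V) : ℕ :=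
  sSup {k | ∃ s : Finset V, IsIndepSet X ↑s ∧ s.card = k}

/-- The set of derangements of a permutation group `G ≤ Sym(n)`: the elements of `G`
fixing no point of `{1,…,n}`. -/
def der {n : ℕ} (G : Subgroup (Equiv.Perm (Fin n))) : Set G :=
  {σ : G | ∀ i : Fin n, (σ : Equiv.Perm (Fin n)) i ≠ i}

/-- For a transitive `G ≤ Sym(n)` and distinct `i j`, removing from `Der(G)`
the set `D = D_{i→j} ∪ D_{j→i}` of derangements mapping `i` to `j` or `j` to `i` leaves
`G_{j→j} ∪ G_{i→j}` as an independent set of size `2|G|/n` in `Cay(G, Der(G) \ D)`. -/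
theorem stmt_0 {n : ℕ} (G : Subgroup (Equiv.Perm (Fin n)))
    (hG : ∀ a b : Fin n, ∃ σ ∈ G, σ a = b)
    (i j : Fin n) (hij : i ≠ j)
    (D : Set G)
    (hD : D = {σ ∈ der G | (σ : Equiv.Perm (Fin n)) i = j} ∪
              {σ ∈ der G | (σ : Equiv.Perm (Fin n)) j = i}) :
    IsIndepSet (cayley G (der G \ D))
      ({σ : G | (σ : Equiv.Perm (Fin n)) j = j} ∪ {σ : G | (σ : Equiv.Perm (Fin n)) i = j}) ∧
    ({σ : G | (σ : Equiv.Perm (Fin n)) j = j} ∪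
      {σ : G | (σ : Equiv.Perm (Fin n)) i = j}).ncard * n = 2 * Nat.card G := by
  subst hD
  constructor
  · rintro σ (hσ | hσ) τ (hτ | hτ) hne ⟨_, ⟨hder, hnD⟩, _⟩
    · exact hder j (by simp [mul_inv_rev]; rw [hτ, ← hσ]; simp; exact hσ.symm)
    · refine hnD (Or.inl ⟨hder, ?_⟩)
      simp only [Subgroup.coe_mul, InvMemClass.coe_inv, Equiv.Perm.mul_apply]
      rw [hτ, ← hσ]; simp; exact hσ.symm
    · refine hnD (Or.inr ⟨hder, ?_⟩)
      simp only [Subgroup.coe_mul, InvMemClass.coe_inv, Equiv.Perm.mul_apply]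
      rw [hτ, ← hσ]; simp
    · exact hder i (by simp [mul_inv_rev]; rw [hτ, ← hσ]; simp)
  · obtain ⟨s0, hs0mem, hs0⟩ := hG i j
    set s : G := ⟨s0, hs0mem⟩ with hs
    have hsinv : (s : Equiv.Perm (Fin n))⁻¹ j = i := by
      rw [← hs0]; simp [hs]
    have hB : {σ : G | (σ : Equiv.Perm (Fin n)) i = j}
        = (fun g => g * s) '' {σ : G | (σ : Equiv.Perm (Fin n)) j = j} := by
      ext τ
      constructor
      · intro hτ
        refine ⟨τ * s⁻¹, ?_, by group⟩
        show ((τ * s⁻¹ : G) : Equiv.Perm (Fin n)) j = j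
        simp only [Subgroup.coe_mul, InvMemClass.coe_inv, Equiv.Perm.mul_apply]
        rw [hsinv]; exact hτ
      · rintro ⟨σ, hσ, rfl⟩
        show ((σ * s : G) : Equiv.Perm (Fin n)) i = j
        simp only [Subgroup.coe_mul, Equiv.Perm.mul_apply]
        rw [show (s : Equiv.Perm (Fin n)) i = j from hs0]; exact hσ
    have hdisj : Disjoint {σ : G | (σ : Equiv.Perm (Fin n)) j = j}
        {σ : G | (σ : Equiv.Perm (Fin n)) i = j} := by
      rw [Set.disjoint_left]
      intro σ h1 h2
      exact hij (((σ : Equiv.Perm (Fin n)).injective (h2.trans h1.symm)))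
    rw [Set.ncard_union_eq hdisj (Set.toFinite _) (Set.toFinite _)]
    have hcardB : {σ : G | (σ : Equiv.Perm (Fin n)) i = j}.ncard
        = {σ : G | (σ : Equiv.Perm (Fin n)) j = j}.ncard := by
      rw [hB, Set.ncard_image_of_injective _ (mul_left_injective s)]
    -- orbit-stabilizer
    have horb : MulAction.orbit G j = Set.univ := by
      ext b
      simp only [Set.mem_univ, iff_true, MulAction.mem_orbit_iff]
      obtain ⟨σ, hσmem, hσ⟩ := hG j b
      exact ⟨⟨σ, hσmem⟩, hσ⟩
    have hstab : ((MulAction.stabilizer G j : Subgroup G) : Set G)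
        = {σ : G | (σ : Equiv.Perm (Fin n)) j = j} := by
      ext σ
      simp [MulAction.mem_stabilizer_iff, Subgroup.smul_def, Equiv.Perm.smul_def]
    have hos : Nat.card (MulAction.orbit G j) * Nat.card (MulAction.stabilizer G j)
        = Nat.card G := by
      classical
      haveI : Fintype G := Fintype.ofFinite _
      simp only [Nat.card_eq_fintype_card]
      exact MulAction.card_orbit_mul_card_stabilizer_eq_card_group G j
    have h1 : Nat.card (MulAction.orbit G j) = n := by
      rw [horb]
      rw [Nat.card_congr (Equiv.Set.univ _), Nat.card_eq_fintype_card, Fintype.card_fin]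
    have h2 : {σ : G | (σ : Equiv.Perm (Fin n)) j = j}.ncard
        = Nat.card (MulAction.stabilizer G j) := by
      rw [← hstab]; exact (Nat.card_coe_set_eq _).symm
    rw [h1, ← h2] at hos
    rw [hcardB, ← hos]
    ring
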